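/- Let ({f_n}_n, {τ_n}_n) be a Lipschitz p-ASF for a subset M of a Banach space X. A Lipschitz p-ASF ({g_n}_n, {ω_n}_n) for M is a dual of ({f_n}_n, {τ_n}_n) if and only if g_n = ζ_n ∘ U and ω_n = V e_n for all n ∈ ℕ, where U : M → ℓ^p(ℕ) is a Lipschitz right-inverse of θ_τ (i.e. θ_τ(Ux) = x for all x ∈ M) and V : ℓ^p(ℕ) → X is a bounded linear left-inverse of θ_f (i.e. V(θ_f x) = x for all x ∈ M) such that V(U(M)) ⊆ M, V e_n ∈ M for all n ∈ ℕ, VU : M → M is an invertible bi-Lipschitz map, and x = Σ_{n=1}^∞ ζ_n(Ux) (VU)^{-1}(V e_n) for all x ∈ M. -/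

import Mathlib

open Filter
open scoped ENNReal NNReal

noncomputable section

/-- A Lipschitz p-approximate Schauder frame for a subset `M` of a Banach space `X`:
`f` is the sequence of Lipschitz "analysis" functions, `τ` the sequence of frame vectors
(elements of `M`), `θf` the analysis map, `θτ` the synthesis operator, `S` the frame map
(an invertible bi-Lipschitz map of `M` with inverse `Sinv`), together with the
reconstruction property. -/
structure LipPASF (𝕂 : Type*) [RCLike 𝕂] (X : Type*) [NormedAddCommGroup X]
    [NormedSpace 𝕂 X] (p : ℝ≥0∞) [Fact (1 ≤ p)] (M : Set X) where
  f : ℕ → M → 𝕂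
  τ : ℕ → M
  f_lip : ∀ n, ∃ K : ℝ≥0, LipschitzWith K (f n)
  θf : M → lp (fun _ : ℕ => 𝕂) p
  θf_apply : ∀ (x : M) (n : ℕ), θf x n = f n x
  θf_lip : ∃ K : ℝ≥0, LipschitzWith K θf
  θτ : lp (fun _ : ℕ => 𝕂) p →L[𝕂] X
  θτ_sum : ∀ a : lp (fun _ : ℕ => 𝕂) p,
    Tendsto (fun N => ∑ n ∈ Finset.range N, a n • ((τ n : X))) atTop (nhds (θτ a))
  S : M → M
  S_sum : ∀ x : M,
    Tendsto (fun N => ∑ n ∈ Finset.range N, f n x • ((τ n : X))) atTop (nhds ((S x : X)))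
  Sinv : M → M
  left_inv : ∀ x, Sinv (S x) = x
  right_inv : ∀ x, S (Sinv x) = x
  S_lip : ∃ K : ℝ≥0, LipschitzWith K S
  Sinv_lip : ∃ K : ℝ≥0, LipschitzWith K Sinv
  recon : ∀ x : M,
    Tendsto (fun N => ∑ n ∈ Finset.range N, f n x • ((Sinv (τ n) : X))) atTop (nhds ((x : X)))

/-- `lp.single` at value `c` is `c • single 1`. -/
lemma single_eq_smul {𝕂 : Type*} [RCLike 𝕂] (p : ℝ≥0∞) (n : ℕ) (c : 𝕂) :
    lp.single (E := fun _ : ℕ => 𝕂) p n c = c • lp.single p n (1 : 𝕂) := by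
  have h := lp.single_smul (E := fun _ : ℕ => 𝕂) p n c (1 : 𝕂)
  rw [smul_eq_mul, mul_one] at h
  exact h

/-- A Lipschitz p-ASF `(g, ω)` is a dual of `(f, τ)` iff `gₙ = ζₙ ∘ U`,
`ωₙ = V eₙ` where `U : M → ℓᵖ` is a Lipschitz right-inverse of `θτ`, `V : ℓᵖ → X` is a
bounded linear left-inverse of `θf`, `V(U(M)) ⊆ M` (the map `VU : M → M` is `W` below),
`V eₙ ∈ M` (the sequence `σ` below), `W` is an invertible bi-Lipschitz map and
`x = ∑ₙ ζₙ(Ux) • W⁻¹(V eₙ)` for all `x ∈ M`. -/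
theorem stmt9 {𝕂 X : Type*} [RCLike 𝕂] [NormedAddCommGroup X] [NormedSpace 𝕂 X]
    [CompleteSpace X] (p : ℝ≥0∞) [Fact (1 ≤ p)] (hp : p ≠ ∞) (M : Set X)
    (F G : LipPASF 𝕂 X p M) :
    ((∀ x : M, Tendsto (fun N => ∑ n ∈ Finset.range N, G.f n x • ((F.τ n : X)))
        atTop (nhds ((x : X)))) ∧
     (∀ x : M, Tendsto (fun N => ∑ n ∈ Finset.range N, F.f n x • ((G.τ n : X)))
        atTop (nhds ((x : X))))) ↔
    ∃ (U : M → lp (fun _ : ℕ => 𝕂) p) (V : lp (fun _ : ℕ => 𝕂) p →L[𝕂] X)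
      (W Winv : M → M) (σ : ℕ → M),
      (∃ K : ℝ≥0, LipschitzWith K U) ∧
      (∀ x : M, F.θτ (U x) = (x : X)) ∧
      (∀ x : M, V (F.θf x) = (x : X)) ∧
      (∀ n (x : M), G.f n x = U x n) ∧
      (∀ n, (G.τ n : X) = V (lp.single p n (1 : 𝕂))) ∧
      (∀ x : M, (W x : X) = V (U x)) ∧
      (∀ n, (σ n : X) = V (lp.single p n (1 : 𝕂))) ∧
      (∀ x, Winv (W x) = x) ∧ (∀ x, W (Winv x) = x) ∧
      (∃ K : ℝ≥0, LipschitzWith K W) ∧ (∃ K : ℝ≥0, LipschitzWith K Winv) ∧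
      (∀ x : M, Tendsto (fun N => ∑ n ∈ Finset.range N, (U x n) • ((Winv (σ n) : X)))
        atTop (nhds ((x : X)))) := by
  classical
  have hGτ : ∀ n, (G.τ n : X) = G.θτ (lp.single p n (1 : 𝕂)) := by
    intro n
    refine tendsto_nhds_unique ?_ (G.θτ_sum (lp.single p n (1 : 𝕂)))
    refine Tendsto.congr' ?_ tendsto_const_nhds
    filter_upwards [eventually_ge_atTop (n + 1)] with N hN
    have : ∀ m ∈ Finset.range N,
        (lp.single (E := fun _ : ℕ => 𝕂) p n (1 : 𝕂)) m • (G.τ m : X)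
          = if m = n then (G.τ n : X) else 0 := by
      intro m _
      by_cases h : m = n
      · subst h; simp [lp.single_apply_self]
      · simp [lp.single_apply_ne p n _ h, h]
    rw [Finset.sum_congr rfl this, Finset.sum_ite_eq' (Finset.range N) n]
    simp [Finset.mem_range.mpr hN]
  constructor
  · rintro ⟨h1, h2⟩
    refine ⟨G.θf, G.θτ, G.S, G.Sinv, G.τ, G.θf_lip, ?_, ?_, ?_, ?_, ?_, hGτ,
      G.left_inv, G.right_inv, G.S_lip, G.Sinv_lip, ?_⟩
    · intro x
      refine tendsto_nhds_unique ?_ (h1 x)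
      have := F.θτ_sum (G.θf x)
      refine this.congr fun N => Finset.sum_congr rfl fun n _ => ?_
      rw [G.θf_apply]
    · intro x
      refine tendsto_nhds_unique ?_ (h2 x)
      have := G.θτ_sum (F.θf x)
      refine this.congr fun N => Finset.sum_congr rfl fun n _ => ?_
      rw [F.θf_apply]
    · intro n x; exact (G.θf_apply x n).symm
    · exact hGτ
    · intro x
      have h1 : Tendsto (fun N => ∑ n ∈ Finset.range N, G.f n x • ((G.τ n : X)))
          atTop (nhds (G.θτ (G.θf x))) := by
        have := G.θτ_sum (G.θf x)
        refine this.congr fun N => Finset.sum_congr rfl fun n _ => ?_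
        rw [G.θf_apply]
      exact tendsto_nhds_unique (G.S_sum x) h1
    · intro x
      have := G.recon x
      refine this.congr fun N => Finset.sum_congr rfl fun n _ => ?_
      rw [G.θf_apply]
  · rintro ⟨U, V, W, Winv, σ, hUlip, hUright, hVleft, hg, hω, hW, hσ, hWinv1, hWinv2,
      hWlip, hWinvlip, hrecon⟩
    constructor
    · intro x
      have := F.θτ_sum (U x)
      rw [hUright] at this
      refine this.congr fun N => Finset.sum_congr rfl fun n _ => ?_
      rw [hg]
    · intro x
      have hs : HasSum (fun n : ℕ => lp.single p n (F.θf x n)) (F.θf x) :=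
        lp.hasSum_single hp (F.θf x)
      have hs2 : HasSum (fun n : ℕ => V (lp.single p n (F.θf x n))) (V (F.θf x)) :=
        V.hasSum hs
      have := hs2.tendsto_sum_nat
      rw [hVleft] at this
      refine this.congr fun N => Finset.sum_congr rfl fun n _ => ?_
      rw [single_eq_smul, map_smul, ← hω, F.θf_apply]
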